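/- For any integer k ≥ 1, γ̄(ℤ, {1, 3k+1}) = (k+1)/(3k+2). -/

import Mathlib

open Filter

open scoped Classical in
noncomputable def lowerDensity (U : Set ℤ) : ℝ :=
  Filter.liminf (fun n : ℕ =>
    (((Finset.Icc (-(n:ℤ)) (n:ℤ)).filter (fun m => m ∈ U)).card : ℝ) / (2*(n:ℝ)+1))
    Filter.atTop

/-- `D` is a dominating set of the Cayley digraph `Γ(ℤ, S)`. -/
def IsDominating (S D : Set ℤ) : Prop :=
  ∀ v : ℤ, v ∈ D ∨ ∃ u ∈ D, ∃ s ∈ S, v = u + s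

/-- The domination ratio of `Γ(ℤ, S)`. -/
noncomputable def domRatio (S : Set ℤ) : ℝ :=
  sInf {x : ℝ | ∃ D : Set ℤ, IsDominating S D ∧ x = lowerDensity D}


open scoped Classical in
noncomputable def cnt (D : Set ℤ) (a b : ℤ) : ℕ :=
  ((Finset.Ico a b).filter (fun m => m ∈ D)).card

open scoped Classical

lemma cnt_split (D : Set ℤ) {a b c : ℤ} (h1 : a ≤ b) (h2 : b ≤ c) :
    cnt D a c = cnt D a b + cnt D b c := by
  unfold cnt
  rw [← Finset.Ico_union_Ico_eq_Ico h1 h2, Finset.filter_union,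
    Finset.card_union_of_disjoint]
  exact (Finset.Ico_disjoint_Ico_consecutive a b c).mono
    (Finset.filter_subset _ _) (Finset.filter_subset _ _)

lemma cnt_mono (D : Set ℤ) {a b a' b' : ℤ} (h1 : a' ≤ a) (h2 : b ≤ b') :
    cnt D a b ≤ cnt D a' b' := by
  unfold cnt
  exact Finset.card_le_card (Finset.filter_subset_filter _
    (Finset.Ico_subset_Ico h1 h2))

lemma cnt_le_length (D : Set ℤ) (a b : ℤ) : (cnt D a b : ℤ) ≤ b - a ∨ b < a := by
  rcases le_or_gt a b with h | h
  · left
    have := Finset.card_filter_le (Finset.Ico a b) (fun m => m ∈ D)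
    have h2 : (Finset.Ico a b).card = (b - a).toNat := Int.card_Ico a b
    have : (cnt D a b : ℤ) ≤ ((b-a).toNat : ℤ) := by
      unfold cnt; rw [← h2]; exact_mod_cast this
    rwa [Int.toNat_of_nonneg (by linarith)] at this
  · right; exact h

lemma cnt_single_mem (D : Set ℤ) {x : ℤ} (h : x ∈ D) : cnt D x (x+1) = 1 := by
  unfold cnt
  have : Finset.Ico x (x+1) = {x} := by
    ext m; simp [Finset.mem_Ico]; omega
  rw [this, Finset.filter_singleton, if_pos h, Finset.card_singleton]

lemma notMem_of_cnt_zero {D : Set ℤ} {a b : ℤ} (h : cnt D a b = 0) {x : ℤ}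
    (hx1 : a ≤ x) (hx2 : x < b) : x ∉ D := by
  unfold cnt at h
  rw [Finset.card_eq_zero, Finset.filter_eq_empty_iff] at h
  exact h (Finset.mem_Ico.mpr ⟨hx1, hx2⟩)
lemma suffix_lemma (k : ℤ) (hk : 1 ≤ k) (D : Set ℤ)
    (hr : ∀ v : ℤ, v ∉ D → v - 1 ∉ D → v - (3*k+1) ∈ D) (y : ℤ) :
    ∃ L : ℤ, 1 ≤ L ∧ L ≤ 6*k+1 ∧ (k+1) * L ≤ (3*k+2) * (cnt D (y - L) y : ℤ) := by
  by_contra hcon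
  push_neg at hcon
  -- L = 2 : no ones at y-1, y-2
  have h2 := hcon 2 (by linarith) (by linarith)
  have hz : cnt D (y-2) y = 0 := by
    by_contra hne
    have h1 : 1 ≤ (cnt D (y-2) y : ℤ) := by exact_mod_cast Nat.one_le_iff_ne_zero.mpr hne
    nlinarith
  have hy1 : y - 1 ∉ D := notMem_of_cnt_zero hz (by linarith) (by linarith)
  have hy2 : y - 2 ∉ D := notMem_of_cnt_zero hz (by linarith) (by linarith)
  -- rule at y-1 : forced one at y-(3k+2)
  have hyp : y - (3*k+2) ∈ D := by
    have e1 : y - 1 - 1 = y - 2 := by ring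
    have := hr (y-1) hy1 (by rw [e1]; exact hy2)
    have e2 : y - 1 - (3*k+1) = y - (3*k+2) := by ring
    rwa [e2] at this
  -- L = 3k+2 : μ' ≤ k - 1
  have hμ0 : (0:ℤ) ≤ (cnt D (y-(3*k+1)) y : ℤ) := by positivity
  have hsplit1 : cnt D (y-(3*k+2)) y
      = cnt D (y-(3*k+2)) (y-(3*k+1)) + cnt D (y-(3*k+1)) y :=
    cnt_split D (by linarith) (by linarith)
  have hone : cnt D (y-(3*k+2)) (y-(3*k+1)) = 1 := by
    have e : y-(3*k+1) = (y-(3*k+2)) + 1 := by ring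
    rw [e]; exact cnt_single_mem D hyp
  have h3 := hcon (3*k+2) (by linarith) (by linarith)
  have hμk : (cnt D (y-(3*k+1)) y : ℤ) ≤ k - 1 := by
    have hc : (cnt D (y-(3*k+2)) y : ℤ) = 1 + (cnt D (y-(3*k+1)) y : ℤ) := by
      rw [hsplit1, hone]; push_cast; ring
    nlinarith
  -- counting step
  set A : Finset ℤ := Finset.Icc (1:ℤ) (3*k) with hAdef
  have hAcard : (A.card : ℤ) = 3*k := by
    rw [hAdef, Int.card_Icc]
    rw [Int.toNat_of_nonneg (by linarith)]
    ring
  set P : ℤ → Prop := fun i => y - i ∈ D ∨ y - i - 1 ∈ D with hPdef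
  set B : Finset ℤ := A.filter (fun i => ¬ P i) with hBdef
  -- card of filter P ≤ 2μ
  have hA1 : ((A.filter (fun i => y - i ∈ D)).card : ℤ) ≤ (cnt D (y-(3*k+1)) y : ℤ) := by
    have : (A.filter (fun i => y - i ∈ D)).card
        ≤ ((Finset.Ico (y-(3*k+1)) y).filter (fun m => m ∈ D)).card := by
      apply Finset.card_le_card_of_injOn (fun i => y - i)
      · intro i hi
        rw [Finset.mem_coe, Finset.mem_filter] at hi ⊢
        rw [hAdef, Finset.mem_Icc] at hi
        refine ⟨Finset.mem_Ico.mpr ⟨by linarith [hi.1.1, hi.1.2], by linarith [hi.1.1]⟩, hi.2⟩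
      · intro i _ j _ h
        simpa using h
    unfold cnt
    exact_mod_cast this
  have hA2 : ((A.filter (fun i => y - i - 1 ∈ D)).card : ℤ) ≤ (cnt D (y-(3*k+1)) y : ℤ) := by
    have : (A.filter (fun i => y - i - 1 ∈ D)).card
        ≤ ((Finset.Ico (y-(3*k+1)) y).filter (fun m => m ∈ D)).card := by
      apply Finset.card_le_card_of_injOn (fun i => y - i - 1)
      · intro i hi
        rw [Finset.mem_coe, Finset.mem_filter] at hi ⊢
        rw [hAdef, Finset.mem_Icc] at hi
        refine ⟨Finset.mem_Ico.mpr ⟨by linarith [hi.1.1, hi.1.2], by linarith [hi.1.1]⟩, hi.2⟩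
      · intro i _ j _ h
        simpa using h
    unfold cnt
    exact_mod_cast this
  have hPcard : ((A.filter P).card : ℤ) ≤ 2 * (cnt D (y-(3*k+1)) y : ℤ) := by
    have hor : A.filter P = A.filter (fun i => y - i ∈ D) ∪ A.filter (fun i => y - i - 1 ∈ D) := by
      rw [← Finset.filter_or]
    have := Finset.card_union_le (A.filter (fun i => y - i ∈ D)) (A.filter (fun i => y - i - 1 ∈ D))
    rw [← hor] at this
    have h' : ((A.filter P).card : ℤ) ≤ ((A.filter (fun i => y - i ∈ D)).card : ℤ) + ((A.filter (fun i => y - i - 1 ∈ D)).card : ℤ) := by exact_mod_cast this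
    linarith
  have hBcard : 3*k - 2*(cnt D (y-(3*k+1)) y : ℤ) ≤ (B.card : ℤ) := by
    have hsum : (A.filter P).card + B.card = A.card := by
      rw [hBdef]
      exact Finset.card_filter_add_card_filter_not (p := P)
    have h2' := congrArg (Nat.cast (R := ℤ)) hsum
    push_cast at h2'
    linarith
  -- forced ones from B
  have hBinj : (B.card : ℤ) ≤ (cnt D (y-(6*k+1)) (y-(3*k+1)) : ℤ) := by
    have : B.card ≤ ((Finset.Ico (y-(6*k+1)) (y-(3*k+1))).filter (fun m => m ∈ D)).card := by
      apply Finset.card_le_card_of_injOn (fun i => y - i - (3*k+1))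
      · intro i hi
        simp only [Finset.mem_coe, hBdef, Finset.mem_filter] at hi
        rw [hAdef, Finset.mem_Icc] at hi
        simp only [hPdef] at hi
        push_neg at hi
        have hD := hr (y - i) hi.2.1 hi.2.2
        rw [Finset.mem_coe, Finset.mem_filter]
        refine ⟨Finset.mem_Ico.mpr ⟨by linarith [hi.1.2], by linarith [hi.1.1]⟩, hD⟩
      · intro i _ j _ h
        simpa using h
    unfold cnt
    exact_mod_cast this
  -- combine
  have hsplit2 : cnt D (y-(6*k+1)) y
      = cnt D (y-(6*k+1)) (y-(3*k+1)) + cnt D (y-(3*k+1)) y :=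
    cnt_split D (by linarith) (by linarith)
  have htot : 3*k - (cnt D (y-(3*k+1)) y : ℤ) ≤ (cnt D (y-(6*k+1)) y : ℤ) := by
    have : (cnt D (y-(6*k+1)) y : ℤ)
        = (cnt D (y-(6*k+1)) (y-(3*k+1)) : ℤ) + (cnt D (y-(3*k+1)) y : ℤ) := by
      rw [hsplit2]; push_cast; ring
    linarith
  have h6 := hcon (6*k+1) (by linarith) (by linarith)
  nlinarith
lemma main_lemma (k : ℤ) (hk : 1 ≤ k) (D : Set ℤ)
    (hr : ∀ v : ℤ, v ∉ D → v - 1 ∉ D → v - (3*k+1) ∈ D) :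
    ∀ N : ℕ, ∀ x : ℤ, (k+1) * N - (k+1)*(6*k+1) ≤ (3*k+2) * (cnt D x (x + N) : ℤ) := by
  intro N
  induction N using Nat.strong_induction_on with
  | _ N ih =>
    intro x
    rcases le_or_gt ((N:ℤ)) (6*k+1) with hN | hN
    · have h0 : (0:ℤ) ≤ (3*k+2) * (cnt D x (x+N) : ℤ) := by positivity
      nlinarith
    · obtain ⟨L, hL1, hL2, hL3⟩ := suffix_lemma k hk D hr (x + N)
      have hLN : L.toNat < N := by omega
      have hLL : (L.toNat : ℤ) = L := Int.toNat_of_nonneg (by linarith)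
      have hcast : ((N - L.toNat : ℕ) : ℤ) = (N : ℤ) - L := by
        rw [Nat.cast_sub (le_of_lt hLN)]; rw [hLL]
      have hih := ih (N - L.toNat) (by omega) x
      rw [hcast] at hih
      have he : x + (N:ℤ) - L = x + ((N:ℤ) - L) := by ring
      rw [he] at hL3
      have hsplit : cnt D x (x + (N:ℤ))
          = cnt D x (x + ((N:ℤ) - L)) + cnt D (x + ((N:ℤ) - L)) (x + (N:ℤ)) := by
        apply cnt_split D <;> linarith
      rw [hsplit]
      push_cast
      linarith
lemma rule_of_dominating (k : ℤ) (D : Set ℤ) (hdom : IsDominating {1, 3*k+1} D) :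
    ∀ v : ℤ, v ∉ D → v - 1 ∉ D → v - (3*k+1) ∈ D := by
  intro v hv hv1
  rcases hdom v with h | ⟨u, hu, s, hs, hv'⟩
  · exact absurd h hv
  · simp only [Set.mem_insert_iff, Set.mem_singleton_iff] at hs
    rcases hs with rfl | rfl
    · exact absurd (show v - 1 ∈ D by rw [show v - 1 = u by omega]; exact hu) hv1
    · rw [show v - (3*k+1) = u by omega]; exact hu

lemma lower_bound (k : ℤ) (hk : 1 ≤ k) (D : Set ℤ)
    (hdom : IsDominating {1, 3*k+1} D) :
    ((k:ℝ)+1)/(3*(k:ℝ)+2) ≤ lowerDensity D := by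
  have hr := rule_of_dominating k D hdom
  have hkR : (1:ℝ) ≤ (k:ℝ) := by exact_mod_cast hk
  have hp : (0:ℝ) < 3*(k:ℝ)+2 := by linarith
  set f : ℕ → ℝ := fun n : ℕ =>
    ((((Finset.Icc (-(n:ℤ)) (n:ℤ)).filter (fun m => m ∈ D)).card : ℝ) / (2*(n:ℝ)+1)) with hf
  have key : ∀ n : ℕ, ((k:ℝ)+1)*(2*(n:ℝ)+1) - ((k:ℝ)+1)*(6*(k:ℝ)+1)
      ≤ (3*(k:ℝ)+2) * (((Finset.Icc (-(n:ℤ)) (n:ℤ)).filter (fun m => m ∈ D)).card : ℝ) := by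
    intro n
    have h1 := main_lemma k hk D hr (2*n+1) (-(n:ℤ))
    have h2 : (-(n:ℤ)) + ((2*n+1 : ℕ) : ℤ) = (n:ℤ)+1 := by push_cast; ring
    rw [h2] at h1
    have h3 : Finset.Ico (-(n:ℤ)) ((n:ℤ)+1) = Finset.Icc (-(n:ℤ)) (n:ℤ) := by
      ext m; simp only [Finset.mem_Ico, Finset.mem_Icc]; omega
    unfold cnt at h1
    rw [h3] at h1
    have h4 : (k+1) * ((2*n+1 : ℕ) : ℤ) - (k+1)*(6*k+1)
        ≤ (3*k+2) * (((Finset.Icc (-(n:ℤ)) (n:ℤ)).filter (fun m => m ∈ D)).card : ℤ) := h1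
    exact_mod_cast h4
  set C : ℝ := ((k:ℝ)+1)*(6*(k:ℝ)+1)/(3*(k:ℝ)+2) with hC
  have hle : ∀ n : ℕ, ((k:ℝ)+1)/(3*(k:ℝ)+2) - C * (1/(2*(n:ℝ)+1)) ≤ f n := by
    intro n
    have h2n : (0:ℝ) < 2*(n:ℝ)+1 := by positivity
    rw [hf]
    simp only []
    rw [← sub_nonneg]
    have hcard := key n
    have hexp : (((Finset.Icc (-(n:ℤ)) (n:ℤ)).filter (fun m => m ∈ D)).card : ℝ) / (2*(n:ℝ)+1)
        - (((k:ℝ)+1)/(3*(k:ℝ)+2) - C * (1/(2*(n:ℝ)+1)))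
        = ((3*(k:ℝ)+2) * (((Finset.Icc (-(n:ℤ)) (n:ℤ)).filter (fun m => m ∈ D)).card : ℝ)
           - (((k:ℝ)+1)*(2*(n:ℝ)+1) - ((k:ℝ)+1)*(6*(k:ℝ)+1)))
          / ((3*(k:ℝ)+2) * (2*(n:ℝ)+1)) := by
      rw [hC]; field_simp
    rw [hexp]
    apply div_nonneg (by linarith) (by positivity)
  have h1 : Filter.Tendsto (fun n : ℕ => 2*(n:ℝ)+1) atTop atTop := by
    apply Filter.tendsto_atTop_add_const_right
    exact (tendsto_natCast_atTop_atTop (R := ℝ)).const_mul_atTop two_pos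
  have h2 : Filter.Tendsto (fun n : ℕ => 1/(2*(n:ℝ)+1)) atTop (nhds 0) := by
    simp only [one_div]
    exact h1.inv_tendsto_atTop
  have hg : Filter.Tendsto (fun n : ℕ => ((k:ℝ)+1)/(3*(k:ℝ)+2) - C * (1/(2*(n:ℝ)+1)))
      atTop (nhds (((k:ℝ)+1)/(3*(k:ℝ)+2))) := by
    have := Filter.Tendsto.sub (tendsto_const_nhds (x := ((k:ℝ)+1)/(3*(k:ℝ)+2)) (f := atTop))
      (h2.const_mul C)
    simpa using this
  have hCpos : (0:ℝ) ≤ C := by rw [hC]; positivity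
  have hb1 : Filter.IsBoundedUnder (· ≥ ·) atTop
      (fun n : ℕ => ((k:ℝ)+1)/(3*(k:ℝ)+2) - C * (1/(2*(n:ℝ)+1))) := by
    apply Filter.isBoundedUnder_of
    refine ⟨((k:ℝ)+1)/(3*(k:ℝ)+2) - C, fun n => ?_⟩
    have h2n : (0:ℝ) < 2*(n:ℝ)+1 := by positivity
    have : 1/(2*(n:ℝ)+1) ≤ 1 := by
      rw [div_le_one h2n]; linarith [Nat.cast_nonneg (α := ℝ) n]
    have := mul_le_mul_of_nonneg_left this hCpos
    simp only [ge_iff_le]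
    nlinarith
  have hb2 : Filter.IsCoboundedUnder (· ≥ ·) atTop f := by
    apply Filter.isCoboundedUnder_ge_of_le atTop (x := 1)
    intro n
    rw [hf]
    simp only []
    have h2n : (0:ℝ) < 2*(n:ℝ)+1 := by positivity
    rw [div_le_one h2n]
    have hcle : ((Finset.Icc (-(n:ℤ)) (n:ℤ)).filter (fun m => m ∈ D)).card
        ≤ (Finset.Icc (-(n:ℤ)) (n:ℤ)).card := Finset.card_filter_le _ _
    have hicc : ((Finset.Icc (-(n:ℤ)) (n:ℤ)).card : ℝ) = 2*(n:ℝ)+1 := by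
      rw [Int.card_Icc]
      have : ((n:ℤ) + 1 - (-(n:ℤ))).toNat = 2*n+1 := by omega
      rw [this]; push_cast; ring
    calc (((Finset.Icc (-(n:ℤ)) (n:ℤ)).filter (fun m => m ∈ D)).card : ℝ)
        ≤ ((Finset.Icc (-(n:ℤ)) (n:ℤ)).card : ℝ) := by exact_mod_cast hcle
      _ = 2*(n:ℝ)+1 := hicc
  calc ((k:ℝ)+1)/(3*(k:ℝ)+2)
      = Filter.liminf (fun n : ℕ => ((k:ℝ)+1)/(3*(k:ℝ)+2) - C * (1/(2*(n:ℝ)+1))) atTop :=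
        (hg.liminf_eq).symm
    _ ≤ Filter.liminf f atTop :=
        Filter.liminf_le_liminf (Filter.Eventually.of_forall hle) hb1 hb2
    _ = lowerDensity D := rfl
def D0 (k : ℤ) : Set ℤ := {m : ℤ | ∃ j t : ℤ, 0 ≤ j ∧ j ≤ k ∧ m = 3*j + (3*k+2)*t}

lemma D0_dominating (k : ℤ) (hk : 1 ≤ k) : IsDominating {1, 3*k+1} (D0 k) := by
  intro v
  have hp : (0:ℤ) < 3*k+2 := by linarith
  set r : ℤ := v % (3*k+2) with hrdef
  have hr0 : 0 ≤ r := Int.emod_nonneg v (by linarith)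
  have hrp : r < 3*k+2 := Int.emod_lt_of_pos v hp
  have hv : v = r + (3*k+2) * (v / (3*k+2)) := by
    rw [hrdef]; rw [Int.emod_def]; ring
  set t : ℤ := v / (3*k+2) with htdef
  have h3 : r % 3 = 0 ∨ r % 3 = 1 ∨ r % 3 = 2 := by omega
  rcases h3 with h | h | h
  · left
    refine ⟨r / 3, t, by omega, by omega, by omega⟩
  · right
    refine ⟨v - 1, ⟨(r-1)/3, t, by omega, by omega, by omega⟩, 1, by left; rfl, by ring⟩
  · right
    have hj : 3*((r+1)/3) = r+1 := by omega
    refine ⟨v - (3*k+1), ⟨(r+1)/3, t - 1, by omega, by omega, ?_⟩, 3*k+1,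
      by right; rfl, by ring⟩
    rw [hj]
    linear_combination hv
lemma cnt_indicator (D : Set ℤ) (x : ℤ) : cnt D x (x+1) = if x ∈ D then 1 else 0 := by
  unfold cnt
  have h : Finset.Ico x (x+1) = {x} := by
    ext m; simp [Finset.mem_Ico]; omega
  rw [h, Finset.filter_singleton]
  split <;> simp

lemma cnt_shift_one (D : Set ℤ) (q : ℤ) (hq : 1 ≤ q)
    (hD : ∀ m : ℤ, m ∈ D ↔ m + q ∈ D) (a : ℤ) :
    cnt D a (a + q) = cnt D (a+1) (a + 1 + q) := by
  have h1 : cnt D a (a + q) = cnt D a (a+1) + cnt D (a+1) (a+q) :=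
    cnt_split D (by linarith) (by linarith)
  have h2 : cnt D (a+1) (a+1+q) = cnt D (a+1) (a+q) + cnt D (a+q) (a+q+1) := by
    have := cnt_split D (a := a+1) (b := a+q) (c := a+q+1) (by linarith) (by linarith)
    rw [show a+1+q = a+q+1 by ring]
    exact this
  have h3 : cnt D a (a+1) = cnt D (a+q) (a+q+1) := by
    rw [cnt_indicator, cnt_indicator]
    by_cases hm : a ∈ D
    · rw [if_pos hm, if_pos (by rw [← hD]; exact hm)]
    · rw [if_neg hm, if_neg (by rw [← hD]; exact hm)]
  omega

lemma D0_shift (k : ℤ) (m : ℤ) : m ∈ D0 k ↔ m + (3*k+2) ∈ D0 k := by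
  constructor
  · rintro ⟨j,t,h1,h2,rfl⟩; exact ⟨j, t+1, h1, h2, by ring⟩
  · rintro ⟨j,t,h1,h2,he⟩
    exact ⟨j, t-1, h1, h2, by linear_combination he⟩

lemma D0_base (k : ℤ) (hk : 1 ≤ k) :
    (cnt (D0 k) 0 (3*k+2) : ℤ) = k+1 := by
  have hp : (0:ℤ) < 3*k+2 := by linarith
  have himg : (Finset.Ico (0:ℤ) (3*k+2)).filter (fun m => m ∈ D0 k)
      = (Finset.Icc (0:ℤ) k).image (fun j => 3*j) := by
    ext m
    simp only [Finset.mem_filter, Finset.mem_Ico, Finset.mem_image, Finset.mem_Icc]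
    constructor
    · rintro ⟨⟨hm0, hmp⟩, j, t, hj0, hjk, rfl⟩
      have ht : t = 0 := by
        rcases lt_trichotomy t 0 with h|h|h
        · exfalso
          have h1 : t ≤ -1 := by omega
          have h2 : (3*k+2)*t ≤ (3*k+2)*(-1) :=
            mul_le_mul_of_nonneg_left h1 (by linarith)
          linarith
        · exact h
        · exfalso
          have h1 : (1:ℤ) ≤ t := h
          have h2 : (3*k+2)*1 ≤ (3*k+2)*t :=
            mul_le_mul_of_nonneg_left h1 (by linarith)
          linarith
      subst ht
      exact ⟨j, ⟨hj0, hjk⟩, by ring⟩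
    · rintro ⟨j, ⟨hj0, hjk⟩, rfl⟩
      exact ⟨⟨by linarith, by linarith⟩, j, 0, hj0, hjk, by ring⟩
  unfold cnt
  rw [show (3*k+2 : ℤ) = 0 + (3*k+2) by ring] at himg ⊢
  rw [himg]
  rw [Finset.card_image_of_injective _ (fun a b h => by omega)]
  rw [Int.card_Icc]
  omega

lemma D0_period (k : ℤ) (hk : 1 ≤ k) :
    ∀ a : ℤ, (cnt (D0 k) a (a + (3*k+2)) : ℤ) = k+1 := by
  have hshift := cnt_shift_one (D0 k) (3*k+2) (by linarith) (D0_shift k)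
  intro a
  induction a using Int.induction_on with
  | zero => rw [show (0:ℤ) + (3*k+2) = 3*k+2 by ring]; exact D0_base k hk
  | succ i ih => rw [← hshift i]; exact ih
  | pred i ih =>
      have := hshift (-(i:ℤ) - 1)
      rw [show (-(i:ℤ) - 1 + 1 : ℤ) = -(i:ℤ) by ring] at this
      rw [this]
      exact ih

lemma D0_mul (k : ℤ) (hk : 1 ≤ k) :
    ∀ q : ℕ, ∀ a : ℤ, (cnt (D0 k) a (a + (q:ℤ)*(3*k+2)) : ℤ) = (q:ℤ)*(k+1) := by
  intro q
  induction q with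
  | zero =>
      intro a
      simp only [Nat.cast_zero, zero_mul, add_zero]
      unfold cnt
      rw [Finset.Ico_self, Finset.filter_empty, Finset.card_empty]
      simp
  | succ q ih =>
      intro a
      have hp : (0:ℤ) < 3*k+2 := by linarith
      have hq0 : (0:ℤ) ≤ (q:ℤ)*(3*k+2) := by positivity
      have hsplit : cnt (D0 k) a (a + ((q:ℤ)+1)*(3*k+2))
          = cnt (D0 k) a (a + (q:ℤ)*(3*k+2))
            + cnt (D0 k) (a + (q:ℤ)*(3*k+2)) (a + (q:ℤ)*(3*k+2) + (3*k+2)) := by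
        have := cnt_split (D0 k) (a := a) (b := a + (q:ℤ)*(3*k+2))
          (c := a + (q:ℤ)*(3*k+2) + (3*k+2)) (by linarith) (by linarith)
        rw [show a + ((q:ℤ)+1)*(3*k+2) = a + (q:ℤ)*(3*k+2) + (3*k+2) by ring]
        exact this
      have hcast : ((q+1 : ℕ):ℤ) = (q:ℤ)+1 := by push_cast; ring
      rw [hcast, hsplit]
      push_cast
      rw [ih a]
      have := D0_period k hk (a + (q:ℤ)*(3*k+2))
      push_cast at this ⊢
      linarith
lemma tendsto_inv_twonplus1 : Filter.Tendsto (fun n : ℕ => 1/(2*(n:ℝ)+1)) atTop (nhds 0) := by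
  have h1 : Filter.Tendsto (fun n : ℕ => 2*(n:ℝ)+1) atTop atTop := by
    apply Filter.tendsto_atTop_add_const_right
    exact (tendsto_natCast_atTop_atTop (R := ℝ)).const_mul_atTop two_pos
  simp only [one_div]
  exact h1.inv_tendsto_atTop

lemma D0_density (k : ℤ) (hk : 1 ≤ k) :
    lowerDensity (D0 k) = ((k:ℝ)+1)/(3*(k:ℝ)+2) := by
  have hkR : (1:ℝ) ≤ (k:ℝ) := by exact_mod_cast hk
  have hpR : (0:ℝ) < 3*(k:ℝ)+2 := by linarith
  have hpZ : (0:ℤ) < 3*k+2 := by linarith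
  have key : ∀ n : ℕ, |(((Finset.Icc (-(n:ℤ)) (n:ℤ)).filter (fun m => m ∈ D0 k)).card : ℝ)
      - (((k:ℝ)+1)/(3*(k:ℝ)+2)) * (2*(n:ℝ)+1)| ≤ (k:ℝ)+1 := by
    intro n
    have hT0 : (0:ℤ) < 2*(n:ℤ)+1 := by positivity
    set T : ℤ := 2*(n:ℤ)+1 with hT
    set q : ℤ := T / (3*k+2) with hq
    have hmod := Int.mul_ediv_add_emod T (3*k+2)
    have hr0 : 0 ≤ T % (3*k+2) := Int.emod_nonneg T (by linarith)
    have hrp : T % (3*k+2) < 3*k+2 := Int.emod_lt_of_pos T hpZ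
    have hq0 : 0 ≤ q := Int.ediv_nonneg (by linarith) (by linarith)
    have hqT1 : (3*k+2)*q ≤ T := by linarith
    have hqT2 : T ≤ (3*k+2)*(q+1) := by
      have he : (3*k+2)*(q+1) = (3*k+2)*q + (3*k+2) := by ring
      linarith
    have hicc : Finset.Icc (-(n:ℤ)) (n:ℤ) = Finset.Ico (-(n:ℤ)) ((n:ℤ)+1) := by
      ext m; simp only [Finset.mem_Icc, Finset.mem_Ico]; omega
    have hlow : q*(k+1) ≤ (cnt (D0 k) (-(n:ℤ)) ((n:ℤ)+1) : ℤ) := by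
      have h1 := D0_mul k hk q.toNat (-(n:ℤ))
      rw [Int.toNat_of_nonneg hq0] at h1
      have h2 : cnt (D0 k) (-(n:ℤ)) (-(n:ℤ) + q*(3*k+2)) ≤ cnt (D0 k) (-(n:ℤ)) ((n:ℤ)+1) := by
        apply cnt_mono _ le_rfl
        have hcomm : q*(3*k+2) = (3*k+2)*q := by ring
        have hTn : (n:ℤ)+1 = -(n:ℤ) + T := by rw [hT]; ring
        rw [hTn, hcomm]
        linarith
      have h2' : (cnt (D0 k) (-(n:ℤ)) (-(n:ℤ) + q*(3*k+2)) : ℤ)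
          ≤ (cnt (D0 k) (-(n:ℤ)) ((n:ℤ)+1) : ℤ) := by exact_mod_cast h2
      linarith [h1, h2']
    have hupp : (cnt (D0 k) (-(n:ℤ)) ((n:ℤ)+1) : ℤ) ≤ (q+1)*(k+1) := by
      have h1 := D0_mul k hk (q+1).toNat (-(n:ℤ))
      rw [Int.toNat_of_nonneg (by linarith)] at h1
      have h2 : cnt (D0 k) (-(n:ℤ)) ((n:ℤ)+1) ≤ cnt (D0 k) (-(n:ℤ)) (-(n:ℤ) + (q+1)*(3*k+2)) := by
        apply cnt_mono _ le_rfl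
        have hcomm : (q+1)*(3*k+2) = (3*k+2)*(q+1) := by ring
        have hTn : (n:ℤ)+1 = -(n:ℤ) + T := by rw [hT]; ring
        rw [hTn, hcomm]
        linarith
      have h2' : (cnt (D0 k) (-(n:ℤ)) ((n:ℤ)+1) : ℤ)
          ≤ (cnt (D0 k) (-(n:ℤ)) (-(n:ℤ) + (q+1)*(3*k+2)) : ℤ) := by exact_mod_cast h2
      linarith [h1, h2']
    have hcard : (((Finset.Icc (-(n:ℤ)) (n:ℤ)).filter (fun m => m ∈ D0 k)).card : ℤ)
        = (cnt (D0 k) (-(n:ℤ)) ((n:ℤ)+1) : ℤ) := by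
      unfold cnt; rw [hicc]
    -- move to ℝ
    have hlowR : (q:ℝ)*((k:ℝ)+1)
        ≤ (((Finset.Icc (-(n:ℤ)) (n:ℤ)).filter (fun m => m ∈ D0 k)).card : ℝ) := by
      have : (q*(k+1) : ℤ) ≤ (((Finset.Icc (-(n:ℤ)) (n:ℤ)).filter (fun m => m ∈ D0 k)).card : ℤ) := by
        rw [hcard]; exact hlow
      exact_mod_cast this
    have huppR : (((Finset.Icc (-(n:ℤ)) (n:ℤ)).filter (fun m => m ∈ D0 k)).card : ℝ)
        ≤ ((q:ℝ)+1)*((k:ℝ)+1) := by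
      have : (((Finset.Icc (-(n:ℤ)) (n:ℤ)).filter (fun m => m ∈ D0 k)).card : ℤ) ≤ (q+1)*(k+1) := by
        rw [hcard]; exact hupp
      exact_mod_cast this
    have hqT1R : (3*(k:ℝ)+2)*(q:ℝ) ≤ 2*(n:ℝ)+1 := by exact_mod_cast hqT1
    have hqT2R : 2*(n:ℝ)+1 ≤ (3*(k:ℝ)+2)*((q:ℝ)+1) := by exact_mod_cast hqT2
    have hmul : ((k:ℝ)+1)/(3*(k:ℝ)+2) * (2*(n:ℝ)+1) * (3*(k:ℝ)+2)
        = ((k:ℝ)+1)*(2*(n:ℝ)+1) := by field_simp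
    have hkp : (0:ℝ) ≤ (k:ℝ)+1 := by linarith
    rw [abs_le]
    constructor
    · rw [← mul_le_mul_iff_of_pos_right hpR]
      nlinarith [mul_le_mul_of_nonneg_right hlowR hpR.le,
        mul_le_mul_of_nonneg_left hqT2R hkp, hmul]
    · rw [← mul_le_mul_iff_of_pos_right hpR]
      nlinarith [mul_le_mul_of_nonneg_right huppR hpR.le,
        mul_le_mul_of_nonneg_left hqT1R hkp, hmul]
  set f : ℕ → ℝ := fun n : ℕ =>
    ((((Finset.Icc (-(n:ℤ)) (n:ℤ)).filter (fun m => m ∈ D0 k)).card : ℝ) / (2*(n:ℝ)+1)) with hf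
  have hfb : ∀ n : ℕ, ((k:ℝ)+1)/(3*(k:ℝ)+2) - ((k:ℝ)+1)*(1/(2*(n:ℝ)+1)) ≤ f n
      ∧ f n ≤ ((k:ℝ)+1)/(3*(k:ℝ)+2) + ((k:ℝ)+1)*(1/(2*(n:ℝ)+1)) := by
    intro n
    have h2n : (0:ℝ) < 2*(n:ℝ)+1 := by positivity
    have hk2 := key n
    rw [abs_le] at hk2
    have h3 : ((k:ℝ)+1)*(1/(2*(n:ℝ)+1))*(2*(n:ℝ)+1) = (k:ℝ)+1 := by field_simp
    constructor
    · rw [hf]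
      simp only []
      rw [← mul_le_mul_iff_of_pos_right h2n]
      have h4 : (((Finset.Icc (-(n:ℤ)) (n:ℤ)).filter (fun m => m ∈ D0 k)).card : ℝ)
          / (2*(n:ℝ)+1) * (2*(n:ℝ)+1)
          = (((Finset.Icc (-(n:ℤ)) (n:ℤ)).filter (fun m => m ∈ D0 k)).card : ℝ) := by
        field_simp
      rw [h4]
      nlinarith [hk2.1, h3]
    · rw [hf]
      simp only []
      rw [← mul_le_mul_iff_of_pos_right h2n]
      have h4 : (((Finset.Icc (-(n:ℤ)) (n:ℤ)).filter (fun m => m ∈ D0 k)).card : ℝ)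
          / (2*(n:ℝ)+1) * (2*(n:ℝ)+1)
          = (((Finset.Icc (-(n:ℤ)) (n:ℤ)).filter (fun m => m ∈ D0 k)).card : ℝ) := by
        field_simp
      rw [h4]
      nlinarith [hk2.2, h3]
  have hg1 : Filter.Tendsto (fun n : ℕ => ((k:ℝ)+1)/(3*(k:ℝ)+2) - ((k:ℝ)+1)*(1/(2*(n:ℝ)+1)))
      atTop (nhds (((k:ℝ)+1)/(3*(k:ℝ)+2))) := by
    have := Filter.Tendsto.sub (tendsto_const_nhds (x := ((k:ℝ)+1)/(3*(k:ℝ)+2)) (f := atTop))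
      (tendsto_inv_twonplus1.const_mul ((k:ℝ)+1))
    simpa using this
  have hg2 : Filter.Tendsto (fun n : ℕ => ((k:ℝ)+1)/(3*(k:ℝ)+2) + ((k:ℝ)+1)*(1/(2*(n:ℝ)+1)))
      atTop (nhds (((k:ℝ)+1)/(3*(k:ℝ)+2))) := by
    have := Filter.Tendsto.add (tendsto_const_nhds (x := ((k:ℝ)+1)/(3*(k:ℝ)+2)) (f := atTop))
      (tendsto_inv_twonplus1.const_mul ((k:ℝ)+1))
    simpa using this
  have hft : Filter.Tendsto f atTop (nhds (((k:ℝ)+1)/(3*(k:ℝ)+2))) :=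
    tendsto_of_tendsto_of_tendsto_of_le_of_le hg1 hg2
      (fun n => (hfb n).1) (fun n => (hfb n).2)
  exact hft.liminf_eq

theorem stmt_16 (k : ℤ) (hk : 1 ≤ k) :
    domRatio {1, 3*k + 1} = ((k:ℝ) + 1) / (3*(k:ℝ) + 2) := by
  unfold domRatio
  have hmem : ((k:ℝ) + 1) / (3*(k:ℝ) + 2)
      ∈ {x : ℝ | ∃ D : Set ℤ, IsDominating {1, 3*k+1} D ∧ x = lowerDensity D} :=
    ⟨D0 k, D0_dominating k hk, (D0_density k hk).symm⟩
  have hlb : ∀ x ∈ {x : ℝ | ∃ D : Set ℤ, IsDominating {1, 3*k+1} D ∧ x = lowerDensity D},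
      ((k:ℝ) + 1) / (3*(k:ℝ) + 2) ≤ x := by
    rintro x ⟨D, hD, rfl⟩
    exact lower_bound k hk D hD
  exact le_antisymm (csInf_le ⟨_, hlb⟩ hmem) (le_csInf ⟨_, hmem⟩ hlb)
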